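/- If for some noisy function y_{t+τ} = f(x_{t+τ}, ε) the representation z_t is not sufficient, i.e., I(x_t; y_{t+τ}) > I(z_t; y_{t+τ}), then the autoinformation gap is strictly positive: I(x_t; x_{t+τ}) > I(z_t; z_{t+τ}). -/

import Mathlib

open Finset

set_option maxHeartbeats 1000000

/-- Probability mass function of a random variable `X : Ω → α` under the weight `μ`. -/
def pmfOf {Ω α : Type} [Fintype Ω] [DecidableEq α] (μ : Ω → ℝ) (X : Ω → α) (a : α) : ℝ :=
  ∑ ω ∈ Finset.univ.filter (fun ω => X ω = a), μ ω

/-- `μ` is a probability mass function on the finite sample space `Ω`. -/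
def IsPMF {Ω : Type} [Fintype Ω] (μ : Ω → ℝ) : Prop :=
  (∀ ω, 0 ≤ μ ω) ∧ ∑ ω, μ ω = 1

/-- Mutual information `I(X; Y)` of two finite-valued random variables. -/
noncomputable def mi {Ω α β : Type} [Fintype Ω] [Fintype α] [DecidableEq α]
    [Fintype β] [DecidableEq β] (μ : Ω → ℝ) (X : Ω → α) (Y : Ω → β) : ℝ :=
  ∑ a : α, ∑ b : β,
    pmfOf μ (fun ω => (X ω, Y ω)) (a, b) *
      Real.log (pmfOf μ (fun ω => (X ω, Y ω)) (a, b) / (pmfOf μ X a * pmfOf μ Y b))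

/-- Conditional mutual information `I(X; Y | Z)` of finite-valued random variables. -/
noncomputable def cmi {Ω α β γ : Type} [Fintype Ω] [Fintype α] [DecidableEq α]
    [Fintype β] [DecidableEq β] [Fintype γ] [DecidableEq γ]
    (μ : Ω → ℝ) (X : Ω → α) (Y : Ω → β) (Z : Ω → γ) : ℝ :=
  ∑ a : α, ∑ b : β, ∑ c : γ,
    pmfOf μ (fun ω => (X ω, Y ω, Z ω)) (a, b, c) *
      Real.log (pmfOf μ (fun ω => (X ω, Y ω, Z ω)) (a, b, c) * pmfOf μ Z c /
        (pmfOf μ (fun ω => (X ω, Z ω)) (a, c) * pmfOf μ (fun ω => (Y ω, Z ω)) (b, c)))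

/-- Conditional pmf `P(X = a | Y = b)`. -/
noncomputable def condPMF {Ω α β : Type} [Fintype Ω] [DecidableEq α] [DecidableEq β]
    (μ : Ω → ℝ) (X : Ω → α) (Y : Ω → β) (a : α) (b : β) : ℝ :=
  pmfOf μ (fun ω => (X ω, Y ω)) (a, b) / pmfOf μ Y b

/-- Independence of two finite-valued random variables. -/
def IndepRV {Ω α β : Type} [Fintype Ω] [Fintype α] [DecidableEq α]
    [Fintype β] [DecidableEq β] (μ : Ω → ℝ) (X : Ω → α) (Y : Ω → β) : Prop :=
  ∀ a b, pmfOf μ (fun ω => (X ω, Y ω)) (a, b) = pmfOf μ X a * pmfOf μ Y b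

section AuxIT
variable {Ω : Type} [Fintype Ω] (μ : Ω → ℝ)

lemma pmf_nonneg (hμ : ∀ ω, 0 ≤ μ ω) {α : Type} [DecidableEq α] (X : Ω → α) (a : α) :
    0 ≤ pmfOf μ X a := Finset.sum_nonneg fun ω _ => hμ ω

lemma pmf_eq_of_iff {α β : Type} [DecidableEq α] [DecidableEq β]
    (X : Ω → α) (Y : Ω → β) (a : α) (b : β) (h : ∀ ω, X ω = a ↔ Y ω = b) :
    pmfOf μ X a = pmfOf μ Y b := by
  unfold pmfOf; congr 1; ext ω; simp [h ω]

lemma pmf_sum {α : Type} [Fintype α] [DecidableEq α] (X : Ω → α) :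
    ∑ a, pmfOf μ X a = ∑ ω, μ ω := by
  unfold pmfOf
  exact Finset.sum_fiberwise Finset.univ X μ

lemma pmf_comp {ι κ : Type} [Fintype ι] [DecidableEq ι] [DecidableEq κ]
    (V : Ω → ι) (T : ι → κ) (t : κ) :
    pmfOf μ (fun ω => T (V ω)) t = ∑ v, if T v = t then pmfOf μ V v else 0 := by
  unfold pmfOf
  simp only [Finset.sum_filter]
  have h : ∀ v : ι, (if T v = t then ∑ ω : Ω, if V ω = v then μ ω else 0 else 0)
      = ∑ ω : Ω, if V ω = v then (if T v = t then μ ω else 0) else 0 := by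
    intro v; split <;> simp_all
  rw [Finset.sum_congr rfl (fun v _ => h v), Finset.sum_comm]
  apply Finset.sum_congr rfl; intro ω _
  rw [Finset.sum_eq_single (V ω)]
  · rw [if_pos rfl]
  · intro b _ hb; rw [if_neg (fun h => hb h.symm)]
  · intro h; exact absurd (Finset.mem_univ _) h

lemma pmf_fst {α β : Type} [Fintype β] [DecidableEq α] [DecidableEq β]
    (X : Ω → α) (Y : Ω → β) (a : α) :
    pmfOf μ X a = ∑ b, pmfOf μ (fun ω => (X ω, Y ω)) (a, b) := by
  unfold pmfOf
  simp only [Finset.sum_filter, Prod.mk.injEq]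
  rw [Finset.sum_comm]
  apply Finset.sum_congr rfl; intro ω _
  rw [Finset.sum_eq_single (Y ω)]
  · by_cases h : X ω = a <;> simp [h]
  · intro b _ hb; simp only [ite_eq_right_iff]; intro h; exact absurd h.2.symm hb
  · intro h; exact absurd (Finset.mem_univ _) h

lemma pmf_snd {α β : Type} [Fintype α] [DecidableEq α] [DecidableEq β]
    (X : Ω → α) (Y : Ω → β) (b : β) :
    pmfOf μ Y b = ∑ a, pmfOf μ (fun ω => (X ω, Y ω)) (a, b) := by
  unfold pmfOf
  simp only [Finset.sum_filter, Prod.mk.injEq]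
  rw [Finset.sum_comm]
  apply Finset.sum_congr rfl; intro ω _
  rw [Finset.sum_eq_single (X ω)]
  · by_cases h : Y ω = b <;> simp [h]
  · intro a _ ha; simp only [ite_eq_right_iff]; intro h; exact absurd h.1.symm ha
  · intro h; exact absurd (Finset.mem_univ _) h

lemma pmf_swap {α β : Type} [DecidableEq α] [DecidableEq β]
    (X : Ω → α) (Y : Ω → β) (a : α) (b : β) :
    pmfOf μ (fun ω => (Y ω, X ω)) (b, a) = pmfOf μ (fun ω => (X ω, Y ω)) (a, b) :=
  pmf_eq_of_iff μ _ _ _ _ (by intro ω; simp [Prod.ext_iff, and_comm])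

lemma mi_comm {α β : Type} [Fintype α] [DecidableEq α] [Fintype β] [DecidableEq β]
    (X : Ω → α) (Y : Ω → β) : mi μ X Y = mi μ Y X := by
  unfold mi
  rw [Finset.sum_comm]
  apply Finset.sum_congr rfl; intro b _
  apply Finset.sum_congr rfl; intro a _
  rw [pmf_swap, mul_comm (pmfOf μ Y b) (pmfOf μ X a)]

lemma cmi_comm {α β γ : Type} [Fintype α] [DecidableEq α] [Fintype β] [DecidableEq β]
    [Fintype γ] [DecidableEq γ] (X : Ω → α) (Y : Ω → β) (Z : Ω → γ) :
    cmi μ X Y Z = cmi μ Y X Z := by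
  unfold cmi
  rw [Finset.sum_comm]
  apply Finset.sum_congr rfl; intro b _
  apply Finset.sum_congr rfl; intro a _
  apply Finset.sum_congr rfl; intro c _
  rw [show pmfOf μ (fun ω => (Y ω, X ω, Z ω)) (b, a, c)
      = pmfOf μ (fun ω => (X ω, Y ω, Z ω)) (a, b, c) from
    pmf_eq_of_iff μ _ _ _ _ (by intro ω; simp [Prod.ext_iff]; tauto),
    mul_comm (pmfOf μ (fun ω => (Y ω, Z ω)) (b, c)) (pmfOf μ (fun ω => (X ω, Z ω)) (a, c))]

lemma mi_chain {α β γ : Type} [Fintype α] [DecidableEq α] [Fintype β] [DecidableEq β]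
    [Fintype γ] [DecidableEq γ] (hμ0 : ∀ ω, 0 ≤ μ ω) (X : Ω → α) (Y : Ω → β) (Z : Ω → γ) :
    mi μ X (fun ω => (Z ω, Y ω)) = mi μ X Z + cmi μ X Y Z := by
  classical
  have hPnn : ∀ a c b, (0:ℝ) ≤ pmfOf μ (fun ω => (X ω, Z ω, Y ω)) (a, c, b) :=
    fun a c b => pmf_nonneg μ hμ0 _ _
  have hXZ : ∀ a c, pmfOf μ (fun ω => (X ω, Z ω)) (a, c)
      = ∑ b, pmfOf μ (fun ω => (X ω, Z ω, Y ω)) (a, c, b) := by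
    intro a c
    rw [pmf_fst μ (fun ω => (X ω, Z ω)) Y (a, c)]
    exact Finset.sum_congr rfl fun b _ =>
      pmf_eq_of_iff μ _ _ _ _ (by intro ω; simp [Prod.ext_iff]; tauto)
  have hZY : ∀ c b, pmfOf μ (fun ω => (Z ω, Y ω)) (c, b)
      = ∑ a, pmfOf μ (fun ω => (X ω, Z ω, Y ω)) (a, c, b) :=
    fun c b => pmf_snd μ X (fun ω => (Z ω, Y ω)) (c, b)
  have hZm : ∀ c, pmfOf μ Z c = ∑ b, pmfOf μ (fun ω => (Z ω, Y ω)) (c, b) :=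
    fun c => pmf_fst μ Z Y c
  have hXm : ∀ a, pmfOf μ X a = ∑ c, ∑ b, pmfOf μ (fun ω => (X ω, Z ω, Y ω)) (a, c, b) := by
    intro a
    rw [pmf_fst μ X (fun ω => (Z ω, Y ω)) a]
    exact Fintype.sum_prod_type _
  have key : ∀ a c b,
      pmfOf μ (fun ω => (X ω, Z ω, Y ω)) (a, c, b) *
        Real.log (pmfOf μ (fun ω => (X ω, Z ω, Y ω)) (a, c, b) /
          (pmfOf μ X a * pmfOf μ (fun ω => (Z ω, Y ω)) (c, b)))
      = pmfOf μ (fun ω => (X ω, Z ω, Y ω)) (a, c, b) *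
          Real.log (pmfOf μ (fun ω => (X ω, Z ω)) (a, c) / (pmfOf μ X a * pmfOf μ Z c))
        + pmfOf μ (fun ω => (X ω, Z ω, Y ω)) (a, c, b) *
          Real.log (pmfOf μ (fun ω => (X ω, Z ω, Y ω)) (a, c, b) * pmfOf μ Z c /
            (pmfOf μ (fun ω => (X ω, Z ω)) (a, c) * pmfOf μ (fun ω => (Z ω, Y ω)) (c, b))) := by
    intro a c b
    rcases eq_or_lt_of_le (hPnn a c b) with h0 | hpos
    · rw [← h0]; ring
    · have hXZpos : 0 < pmfOf μ (fun ω => (X ω, Z ω)) (a, c) :=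
        lt_of_lt_of_le hpos (by
          rw [hXZ a c]
          exact Finset.single_le_sum (fun b _ => hPnn a c b) (Finset.mem_univ b))
      have hZYpos : 0 < pmfOf μ (fun ω => (Z ω, Y ω)) (c, b) :=
        lt_of_lt_of_le hpos (by
          rw [hZY c b]
          exact Finset.single_le_sum (fun a _ => hPnn a c b) (Finset.mem_univ a))
      have hXpos : 0 < pmfOf μ X a :=
        lt_of_lt_of_le hXZpos (by
          rw [hXm a, hXZ a c]
          exact Finset.single_le_sum
            (fun c _ => Finset.sum_nonneg fun b _ => hPnn a c b) (Finset.mem_univ c))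
      have hZpos : 0 < pmfOf μ Z c :=
        lt_of_lt_of_le hZYpos (by
          rw [hZm c]
          exact Finset.single_le_sum (fun b _ => pmf_nonneg μ hμ0 _ _) (Finset.mem_univ b))
      have hB : pmfOf μ (fun ω => (X ω, Z ω)) (a, c) / (pmfOf μ X a * pmfOf μ Z c) ≠ 0 :=
        ne_of_gt (div_pos hXZpos (mul_pos hXpos hZpos))
      have hC : pmfOf μ (fun ω => (X ω, Z ω, Y ω)) (a, c, b) * pmfOf μ Z c /
          (pmfOf μ (fun ω => (X ω, Z ω)) (a, c) * pmfOf μ (fun ω => (Z ω, Y ω)) (c, b)) ≠ 0 :=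
        ne_of_gt (div_pos (mul_pos hpos hZpos) (mul_pos hXZpos hZYpos))
      rw [← mul_add, ← Real.log_mul hB hC]
      congr 2
      field_simp
  have L1 : mi μ X (fun ω => (Z ω, Y ω))
      = ∑ a, ∑ c, ∑ b, pmfOf μ (fun ω => (X ω, Z ω, Y ω)) (a, c, b) *
          Real.log (pmfOf μ (fun ω => (X ω, Z ω, Y ω)) (a, c, b) /
            (pmfOf μ X a * pmfOf μ (fun ω => (Z ω, Y ω)) (c, b))) := by
    unfold mi
    exact Finset.sum_congr rfl fun a _ => Fintype.sum_prod_type _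
  have L2 : mi μ X Z
      = ∑ a, ∑ c, ∑ b, pmfOf μ (fun ω => (X ω, Z ω, Y ω)) (a, c, b) *
          Real.log (pmfOf μ (fun ω => (X ω, Z ω)) (a, c) / (pmfOf μ X a * pmfOf μ Z c)) := by
    unfold mi
    apply Finset.sum_congr rfl; intro a _
    apply Finset.sum_congr rfl; intro c _
    rw [← Finset.sum_mul, ← hXZ a c]
  have L3 : cmi μ X Y Z
      = ∑ a, ∑ c, ∑ b, pmfOf μ (fun ω => (X ω, Z ω, Y ω)) (a, c, b) *
          Real.log (pmfOf μ (fun ω => (X ω, Z ω, Y ω)) (a, c, b) * pmfOf μ Z c /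
            (pmfOf μ (fun ω => (X ω, Z ω)) (a, c) * pmfOf μ (fun ω => (Z ω, Y ω)) (c, b))) := by
    unfold cmi
    apply Finset.sum_congr rfl; intro a _
    rw [Finset.sum_comm]
    apply Finset.sum_congr rfl; intro c _
    apply Finset.sum_congr rfl; intro b _
    rw [show pmfOf μ (fun ω => (X ω, Y ω, Z ω)) (a, b, c)
        = pmfOf μ (fun ω => (X ω, Z ω, Y ω)) (a, c, b) from
      pmf_eq_of_iff μ _ _ _ _ (by intro ω; simp [Prod.ext_iff]; tauto),
      pmf_swap μ Z Y c b]
  rw [L1, L2, L3, ← Finset.sum_add_distrib]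
  apply Finset.sum_congr rfl; intro a _
  rw [← Finset.sum_add_distrib]
  apply Finset.sum_congr rfl; intro c _
  rw [← Finset.sum_add_distrib]
  exact Finset.sum_congr rfl fun b _ => key a c b

lemma cmi_nonneg {α β γ : Type} [Fintype α] [DecidableEq α] [Fintype β] [DecidableEq β]
    [Fintype γ] [DecidableEq γ] (hμ0 : ∀ ω, 0 ≤ μ ω) (hμ1 : ∑ ω, μ ω = 1)
    (X : Ω → α) (Y : Ω → β) (Z : Ω → γ) : 0 ≤ cmi μ X Y Z := by
  classical
  have hPnn : ∀ a b c, (0:ℝ) ≤ pmfOf μ (fun ω => (X ω, Y ω, Z ω)) (a, b, c) :=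
    fun a b c => pmf_nonneg μ hμ0 (fun ω => (X ω, Y ω, Z ω)) (a, b, c)
  have hXZ : ∀ a c, pmfOf μ (fun ω => (X ω, Z ω)) (a, c)
      = ∑ b, pmfOf μ (fun ω => (X ω, Y ω, Z ω)) (a, b, c) := by
    intro a c
    rw [pmf_fst μ (fun ω => (X ω, Z ω)) Y (a, c)]
    exact Finset.sum_congr rfl fun b _ =>
      pmf_eq_of_iff μ _ _ _ _ (by intro ω; simp [Prod.ext_iff]; tauto)
  have hYZ : ∀ b c, pmfOf μ (fun ω => (Y ω, Z ω)) (b, c)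
      = ∑ a, pmfOf μ (fun ω => (X ω, Y ω, Z ω)) (a, b, c) :=
    fun b c => pmf_snd μ X (fun ω => (Y ω, Z ω)) (b, c)
  have hZb : ∀ c, pmfOf μ Z c = ∑ b, pmfOf μ (fun ω => (Y ω, Z ω)) (b, c) :=
    fun c => pmf_snd μ Y Z c
  have hZa : ∀ c, pmfOf μ Z c = ∑ a, pmfOf μ (fun ω => (X ω, Z ω)) (a, c) :=
    fun c => pmf_snd μ X Z c
  have key : ∀ a b c,
      pmfOf μ (fun ω => (X ω, Y ω, Z ω)) (a, b, c)
        - pmfOf μ (fun ω => (X ω, Z ω)) (a, c) * pmfOf μ (fun ω => (Y ω, Z ω)) (b, c) /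
            pmfOf μ Z c
      ≤ pmfOf μ (fun ω => (X ω, Y ω, Z ω)) (a, b, c) *
          Real.log (pmfOf μ (fun ω => (X ω, Y ω, Z ω)) (a, b, c) * pmfOf μ Z c /
            (pmfOf μ (fun ω => (X ω, Z ω)) (a, c) * pmfOf μ (fun ω => (Y ω, Z ω)) (b, c))) := by
    intro a b c
    rcases eq_or_lt_of_le (hPnn a b c) with h0 | hpos
    · rw [← h0, zero_mul, zero_sub, neg_nonpos]
      exact div_nonneg (mul_nonneg (pmf_nonneg μ hμ0 _ _) (pmf_nonneg μ hμ0 _ _))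
        (pmf_nonneg μ hμ0 _ _)
    · have hXZpos : 0 < pmfOf μ (fun ω => (X ω, Z ω)) (a, c) :=
        lt_of_lt_of_le hpos (by
          rw [hXZ a c]
          exact Finset.single_le_sum (fun b _ => hPnn a b c) (Finset.mem_univ b))
      have hYZpos : 0 < pmfOf μ (fun ω => (Y ω, Z ω)) (b, c) :=
        lt_of_lt_of_le hpos (by
          rw [hYZ b c]
          exact Finset.single_le_sum (fun a _ => hPnn a b c) (Finset.mem_univ a))
      have hZpos : 0 < pmfOf μ Z c :=
        lt_of_lt_of_le hYZpos (by
          rw [hZb c]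
          exact Finset.single_le_sum
            (fun b' _ => pmf_nonneg μ hμ0 (fun ω => (Y ω, Z ω)) (b', c)) (Finset.mem_univ b))
      set P := pmfOf μ (fun ω => (X ω, Y ω, Z ω)) (a, b, c) with hPdef
      set q := pmfOf μ (fun ω => (X ω, Z ω)) (a, c) * pmfOf μ (fun ω => (Y ω, Z ω)) (b, c) /
          pmfOf μ Z c with hqdef
      have hqpos : 0 < q := div_pos (mul_pos hXZpos hYZpos) hZpos
      have harg : P * pmfOf μ Z c /
          (pmfOf μ (fun ω => (X ω, Z ω)) (a, c) * pmfOf μ (fun ω => (Y ω, Z ω)) (b, c))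
          = P / q := by
        rw [hqdef]; field_simp
      rw [harg]
      have hlog : Real.log (q / P) ≤ q / P - 1 :=
        Real.log_le_sub_one_of_pos (div_pos hqpos hpos)
      have hlogeq : Real.log (P / q) = - Real.log (q / P) := by
        rw [Real.log_div hpos.ne' hqpos.ne', Real.log_div hqpos.ne' hpos.ne']; ring
      rw [hlogeq]
      have h1 : P * (q / P - 1) = q - P := by field_simp
      nlinarith [mul_le_mul_of_nonneg_left hlog hpos.le]
  unfold cmi
  have hsum1 : ∑ a, ∑ b, ∑ c, pmfOf μ (fun ω => (X ω, Y ω, Z ω)) (a, b, c) = 1 := by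
    have := pmf_sum μ (fun ω => (X ω, Y ω, Z ω))
    rw [hμ1] at this
    rw [← this, Fintype.sum_prod_type]
    exact Finset.sum_congr rfl fun a _ =>
      (Fintype.sum_prod_type (fun y => pmfOf μ (fun ω => (X ω, Y ω, Z ω)) (a, y))).symm
  have hsum2 : ∑ a, ∑ b, ∑ c,
      pmfOf μ (fun ω => (X ω, Z ω)) (a, c) * pmfOf μ (fun ω => (Y ω, Z ω)) (b, c) /
        pmfOf μ Z c ≤ 1 := by
    have hcomm : (∑ a, ∑ b, ∑ c,
        pmfOf μ (fun ω => (X ω, Z ω)) (a, c) * pmfOf μ (fun ω => (Y ω, Z ω)) (b, c) /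
          pmfOf μ Z c)
        = ∑ c, ∑ a, ∑ b,
        pmfOf μ (fun ω => (X ω, Z ω)) (a, c) * pmfOf μ (fun ω => (Y ω, Z ω)) (b, c) /
          pmfOf μ Z c := by
      have h1 : (∑ a : α, ∑ b : β, ∑ c : γ,
          pmfOf μ (fun ω => (X ω, Z ω)) (a, c) * pmfOf μ (fun ω => (Y ω, Z ω)) (b, c) /
            pmfOf μ Z c)
          = ∑ a : α, ∑ c : γ, ∑ b : β,
          pmfOf μ (fun ω => (X ω, Z ω)) (a, c) * pmfOf μ (fun ω => (Y ω, Z ω)) (b, c) /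
            pmfOf μ Z c :=
        Finset.sum_congr rfl fun a _ => Finset.sum_comm
      rw [h1]
      exact Finset.sum_comm
    rw [hcomm]
    calc ∑ c, ∑ a, ∑ b,
            pmfOf μ (fun ω => (X ω, Z ω)) (a, c) * pmfOf μ (fun ω => (Y ω, Z ω)) (b, c) /
              pmfOf μ Z c
          ≤ ∑ c, pmfOf μ Z c := by
            apply Finset.sum_le_sum; intro c _
            have heq : ∑ a, ∑ b,
                pmfOf μ (fun ω => (X ω, Z ω)) (a, c) * pmfOf μ (fun ω => (Y ω, Z ω)) (b, c) /
                  pmfOf μ Z c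
                = (∑ a, pmfOf μ (fun ω => (X ω, Z ω)) (a, c)) *
                    (∑ b, pmfOf μ (fun ω => (Y ω, Z ω)) (b, c)) / pmfOf μ Z c := by
              rw [Finset.sum_mul, Finset.sum_div]
              apply Finset.sum_congr rfl; intro a _
              rw [Finset.mul_sum, Finset.sum_div]
            rw [heq, ← hZa c, ← hZb c]
            rcases eq_or_lt_of_le (pmf_nonneg μ hμ0 Z c) with h0 | hp
            · rw [← h0]; simp
            · rw [mul_div_assoc, div_self hp.ne', mul_one]
        _ = 1 := by rw [pmf_sum, hμ1]
  calc (0:ℝ) = 1 - 1 := by norm_num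
    _ ≤ (∑ a, ∑ b, ∑ c, pmfOf μ (fun ω => (X ω, Y ω, Z ω)) (a, b, c))
        - ∑ a, ∑ b, ∑ c, pmfOf μ (fun ω => (X ω, Z ω)) (a, c) *
            pmfOf μ (fun ω => (Y ω, Z ω)) (b, c) / pmfOf μ Z c := by
        rw [hsum1]; linarith [hsum2]
    _ = ∑ a, ∑ b, ∑ c, (pmfOf μ (fun ω => (X ω, Y ω, Z ω)) (a, b, c)
        - pmfOf μ (fun ω => (X ω, Z ω)) (a, c) * pmfOf μ (fun ω => (Y ω, Z ω)) (b, c) /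
            pmfOf μ Z c) := by
        rw [← Finset.sum_sub_distrib]
        apply Finset.sum_congr rfl; intro a _
        rw [← Finset.sum_sub_distrib]
        apply Finset.sum_congr rfl; intro b _
        rw [← Finset.sum_sub_distrib]
    _ ≤ _ := by
        apply Finset.sum_le_sum; intro a _
        apply Finset.sum_le_sum; intro b _
        apply Finset.sum_le_sum; intro c _
        exact key a b c

lemma mi_recode {α β κ : Type} [Fintype α] [DecidableEq α] [Fintype β] [DecidableEq β]
    [Fintype κ] [DecidableEq κ] (X : Ω → α) (Y : Ω → β) {ψ : β → κ}
    (hψ : Function.Injective ψ) :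
    mi μ X (fun ω => ψ (Y ω)) = mi μ X Y := by
  have hA : ∀ a b, pmfOf μ (fun ω => (X ω, ψ (Y ω))) (a, ψ b)
      = pmfOf μ (fun ω => (X ω, Y ω)) (a, b) := fun a b =>
    pmf_eq_of_iff μ _ _ _ _ (by intro ω; simp [Prod.ext_iff, hψ.eq_iff])
  have hB : ∀ b, pmfOf μ (fun ω => ψ (Y ω)) (ψ b) = pmfOf μ Y b := fun b =>
    pmf_eq_of_iff μ _ _ _ _ (by intro ω; simp [hψ.eq_iff])
  have h0 : ∀ a c, c ∉ Finset.univ.image ψ →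
      pmfOf μ (fun ω => (X ω, ψ (Y ω))) (a, c) = 0 := by
    intro a c hc
    unfold pmfOf
    apply Finset.sum_eq_zero
    intro ω hω
    simp only [Finset.mem_filter, Prod.mk.injEq] at hω
    exact absurd (Finset.mem_image_of_mem ψ (Finset.mem_univ (Y ω))) (hω.2.2 ▸ hc)
  unfold mi
  apply Finset.sum_congr rfl; intro a _
  rw [← Finset.sum_subset (Finset.subset_univ (Finset.univ.image ψ))
    (fun c _ hc => by rw [h0 a c hc, zero_mul])]
  rw [Finset.sum_image (fun b _ b' _ h => hψ h)]
  exact Finset.sum_congr rfl fun b _ => by rw [hA a b, hB b]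

lemma mi_drop_indep {α β κ : Type} [Fintype α] [DecidableEq α] [Fintype β] [DecidableEq β]
    [Fintype κ] [DecidableEq κ] (hμ1 : ∑ ω, μ ω = 1)
    (X : Ω → α) (Y : Ω → β) (W : Ω → κ)
    (hInd : ∀ a b w, pmfOf μ (fun ω => (X ω, Y ω, W ω)) (a, b, w)
      = pmfOf μ (fun ω => (X ω, Y ω)) (a, b) * pmfOf μ W w) :
    mi μ X (fun ω => (Y ω, W ω)) = mi μ X Y := by
  have hYW : ∀ b w, pmfOf μ (fun ω => (Y ω, W ω)) (b, w) = pmfOf μ Y b * pmfOf μ W w := by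
    intro b w
    rw [pmf_snd μ X (fun ω => (Y ω, W ω)) (b, w)]
    calc ∑ a, pmfOf μ (fun ω => (X ω, Y ω, W ω)) (a, b, w)
        = ∑ a, pmfOf μ (fun ω => (X ω, Y ω)) (a, b) * pmfOf μ W w :=
          Finset.sum_congr rfl fun a _ => hInd a b w
      _ = (∑ a, pmfOf μ (fun ω => (X ω, Y ω)) (a, b)) * pmfOf μ W w :=
          (Finset.sum_mul _ _ _).symm
      _ = pmfOf μ Y b * pmfOf μ W w := by rw [← pmf_snd μ X Y b]
  have key : ∀ a b w, pmfOf μ (fun ω => (X ω, Y ω, W ω)) (a, b, w) *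
      Real.log (pmfOf μ (fun ω => (X ω, Y ω, W ω)) (a, b, w) /
        (pmfOf μ X a * pmfOf μ (fun ω => (Y ω, W ω)) (b, w)))
      = pmfOf μ W w * (pmfOf μ (fun ω => (X ω, Y ω)) (a, b) *
          Real.log (pmfOf μ (fun ω => (X ω, Y ω)) (a, b) /
            (pmfOf μ X a * pmfOf μ Y b))) := by
    intro a b w
    rw [hInd a b w, hYW b w]
    rcases eq_or_ne (pmfOf μ W w) 0 with h | h
    · rw [h]; ring
    · have harg : pmfOf μ (fun ω => (X ω, Y ω)) (a, b) * pmfOf μ W w /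
          (pmfOf μ X a * (pmfOf μ Y b * pmfOf μ W w))
          = pmfOf μ (fun ω => (X ω, Y ω)) (a, b) / (pmfOf μ X a * pmfOf μ Y b) := by
        rw [show pmfOf μ X a * (pmfOf μ Y b * pmfOf μ W w)
            = pmfOf μ X a * pmfOf μ Y b * pmfOf μ W w from by ring,
          mul_div_mul_right _ _ h]
      rw [harg]; ring
  unfold mi
  calc ∑ a, ∑ p : β × κ,
        pmfOf μ (fun ω => (X ω, (Y ω, W ω))) (a, p) *
          Real.log (pmfOf μ (fun ω => (X ω, (Y ω, W ω))) (a, p) /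
            (pmfOf μ X a * pmfOf μ (fun ω => (Y ω, W ω)) p))
      = ∑ a, ∑ b, ∑ w, pmfOf μ W w * (pmfOf μ (fun ω => (X ω, Y ω)) (a, b) *
          Real.log (pmfOf μ (fun ω => (X ω, Y ω)) (a, b) /
            (pmfOf μ X a * pmfOf μ Y b))) := by
        apply Finset.sum_congr rfl; intro a _
        rw [Fintype.sum_prod_type
          (f := fun p : β × κ => pmfOf μ (fun ω => (X ω, (Y ω, W ω))) (a, p) *
            Real.log (pmfOf μ (fun ω => (X ω, (Y ω, W ω))) (a, p) /
              (pmfOf μ X a * pmfOf μ (fun ω => (Y ω, W ω)) p)))]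
        exact Finset.sum_congr rfl fun b _ => Finset.sum_congr rfl fun w _ => key a b w
    _ = ∑ a, ∑ b, pmfOf μ (fun ω => (X ω, Y ω)) (a, b) *
          Real.log (pmfOf μ (fun ω => (X ω, Y ω)) (a, b) /
            (pmfOf μ X a * pmfOf μ Y b)) := by
        apply Finset.sum_congr rfl; intro a _
        apply Finset.sum_congr rfl; intro b _
        rw [← Finset.sum_mul, pmf_sum μ W, hμ1, one_mul]
    _ = _ := rfl

lemma mi_dpi {α β κ : Type} [Fintype α] [DecidableEq α] [Fintype β] [DecidableEq β]
    [Fintype κ] [DecidableEq κ] (hμ0 : ∀ ω, 0 ≤ μ ω) (hμ1 : ∑ ω, μ ω = 1)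
    (X : Ω → α) (Y : Ω → β) (h : β → κ) :
    mi μ X (fun ω => h (Y ω)) ≤ mi μ X Y := by
  calc mi μ X (fun ω => h (Y ω))
      ≤ mi μ X (fun ω => h (Y ω)) + cmi μ X Y (fun ω => h (Y ω)) :=
        le_add_of_nonneg_right (cmi_nonneg μ hμ0 hμ1 X Y _)
    _ = mi μ X (fun ω => (h (Y ω), Y ω)) := (mi_chain μ hμ0 X Y _).symm
    _ = mi μ X Y :=
        mi_recode μ X Y (ψ := fun b => (h b, b))
          (fun b b' hbb => congrArg Prod.snd hbb)

lemma indep_push {ι κ σ : Type} [Fintype ι] [DecidableEq ι] [Fintype κ] [DecidableEq κ]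
    [Fintype σ] [DecidableEq σ] (V : Ω → ι) (W : Ω → κ)
    (h : ∀ v w, pmfOf μ (fun ω => (V ω, W ω)) (v, w) = pmfOf μ V v * pmfOf μ W w)
    (S : ι → σ) :
    ∀ s w, pmfOf μ (fun ω => (S (V ω), W ω)) (s, w)
      = pmfOf μ (fun ω => S (V ω)) s * pmfOf μ W w := by
  intro s w
  calc pmfOf μ (fun ω => (S (V ω), W ω)) (s, w)
      = ∑ p : ι × κ, if (S p.1, p.2) = (s, w)
          then pmfOf μ (fun ω => (V ω, W ω)) p else 0 :=
        pmf_comp μ (fun ω => (V ω, W ω)) (fun p => (S p.1, p.2)) (s, w)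
    _ = ∑ v, ∑ w', if S v = s ∧ w' = w then pmfOf μ V v * pmfOf μ W w' else 0 := by
        rw [Fintype.sum_prod_type (f := fun p : ι × κ => if (S p.1, p.2) = (s, w)
          then pmfOf μ (fun ω => (V ω, W ω)) p else 0)]
        apply Finset.sum_congr rfl; intro v _
        apply Finset.sum_congr rfl; intro w' _
        rw [h v w']
        simp [Prod.ext_iff]
    _ = (∑ v, if S v = s then pmfOf μ V v else 0) * pmfOf μ W w := by
        rw [Finset.sum_mul]
        apply Finset.sum_congr rfl; intro v _
        by_cases hs : S v = s <;> simp [hs]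
    _ = pmfOf μ (fun ω => S (V ω)) s * pmfOf μ W w := by rw [← pmf_comp μ V S s]

end AuxIT

/-- **Insufficiency implies a strictly positive autoinformation gap**: if for some noisy
function `y_{t+τ} = f(x_{t+τ}, ε₃)` the representation `z_t = g(x_t, ε₁)` is not sufficient,
i.e. `I(x_t; y_{t+τ}) > I(z_t; y_{t+τ})`, then the autoinformation gap is strictly positive:
`I(x_t; x_{t+τ}) > I(z_t; z_{t+τ})`, where `z_{t+τ} = g(x_{t+τ}, ε₂)` is obtained with the
same noisy encoding function and all noise variables are mutually independent and
independent of the process. -/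

theorem autoinfo_gap_pos_of_insufficiency {Ω A E E' Z B : Type} [Fintype Ω]
    [Fintype A] [DecidableEq A] [Fintype E] [DecidableEq E] [Fintype E'] [DecidableEq E']
    [Fintype Z] [DecidableEq Z] [Fintype B] [DecidableEq B]
    (μ : Ω → ℝ) (hμ : IsPMF μ)
    (x x' : Ω → A) (ε₁ ε₂ : Ω → E) (ε₃ : Ω → E')
    (g : A → E → Z) (f : A → E' → B)
    (hIndep : ∀ (e₁ e₂ : E) (e₃ : E') (a a' : A),
      pmfOf μ (fun ω => (ε₁ ω, ε₂ ω, ε₃ ω, x ω, x' ω)) (e₁, e₂, e₃, a, a')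
        = pmfOf μ ε₁ e₁ * pmfOf μ ε₂ e₂ * pmfOf μ ε₃ e₃
          * pmfOf μ (fun ω => (x ω, x' ω)) (a, a'))
    (hInsuff : mi μ x (fun ω => f (x' ω) (ε₃ ω))
      > mi μ (fun ω => g (x ω) (ε₁ ω)) (fun ω => f (x' ω) (ε₃ ω))) :
    mi μ x x' > mi μ (fun ω => g (x ω) (ε₁ ω)) (fun ω => g (x' ω) (ε₂ ω)) := by
  obtain ⟨hμ0, hμ1⟩ := hμ
  set z : Ω → Z := fun ω => g (x ω) (ε₁ ω) with hz
  set z' : Ω → Z := fun ω => g (x' ω) (ε₂ ω) with hz'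
  set y : Ω → B := fun ω => f (x' ω) (ε₃ ω) with hy
  have hp1 : ∑ e, pmfOf μ ε₁ e = 1 := by rw [pmf_sum, hμ1]
  have hp2 : ∑ e, pmfOf μ ε₂ e = 1 := by rw [pmf_sum, hμ1]
  have hp3 : ∑ e, pmfOf μ ε₃ e = 1 := by rw [pmf_sum, hμ1]
  -- master expansion of any statistic of the five-tuple
  have hJoint : ∀ {κ : Type} [Fintype κ] [DecidableEq κ]
      (T : E × E × E' × A × A → κ) (t : κ),
      pmfOf μ (fun ω => T (ε₁ ω, ε₂ ω, ε₃ ω, x ω, x' ω)) t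
      = ∑ e₁, ∑ e₂, ∑ e₃, ∑ a, ∑ a', if T (e₁, e₂, e₃, a, a') = t
          then pmfOf μ ε₁ e₁ * pmfOf μ ε₂ e₂ * pmfOf μ ε₃ e₃ *
            pmfOf μ (fun ω => (x ω, x' ω)) (a, a') else 0 := by
    intro κ _ _ T t
    rw [pmf_comp μ (fun ω => (ε₁ ω, ε₂ ω, ε₃ ω, x ω, x' ω)) T t]
    simp only [Fintype.sum_prod_type]
    refine Finset.sum_congr rfl fun e₁ _ => Finset.sum_congr rfl fun e₂ _ =>
      Finset.sum_congr rfl fun e₃ _ => Finset.sum_congr rfl fun a _ =>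
      Finset.sum_congr rfl fun a' _ => ?_
    rw [hIndep e₁ e₂ e₃ a a']
  -- closed forms of the needed marginals
  have hM1 : ∀ e₁ a a', pmfOf μ (fun ω => (ε₁ ω, x ω, x' ω)) (e₁, a, a')
      = pmfOf μ ε₁ e₁ * pmfOf μ (fun ω => (x ω, x' ω)) (a, a') := by
    intro e₁ a a'
    calc pmfOf μ (fun ω => (ε₁ ω, x ω, x' ω)) (e₁, a, a')
        = ∑ e₁', ∑ e₂', ∑ e₃', ∑ b, ∑ b', if (e₁', b, b') = (e₁, a, a')
            then pmfOf μ ε₁ e₁' * pmfOf μ ε₂ e₂' * pmfOf μ ε₃ e₃' *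
              pmfOf μ (fun ω => (x ω, x' ω)) (b, b') else 0 :=
          hJoint (fun q => (q.1, q.2.2.2.1, q.2.2.2.2)) (e₁, a, a')
      _ = pmfOf μ ε₁ e₁ * pmfOf μ (fun ω => (x ω, x' ω)) (a, a') := by
          simp [Prod.mk.injEq, ite_and, Finset.sum_ite_eq, Finset.sum_ite_eq',
            ← Finset.sum_mul, ← Finset.mul_sum, hp1, hp2, hp3]
  have hM3 : ∀ e₃ a a', pmfOf μ (fun ω => (ε₃ ω, x ω, x' ω)) (e₃, a, a')
      = pmfOf μ ε₃ e₃ * pmfOf μ (fun ω => (x ω, x' ω)) (a, a') := by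
    intro e₃ a a'
    calc pmfOf μ (fun ω => (ε₃ ω, x ω, x' ω)) (e₃, a, a')
        = ∑ e₁', ∑ e₂', ∑ e₃', ∑ b, ∑ b', if (e₃', b, b') = (e₃, a, a')
            then pmfOf μ ε₁ e₁' * pmfOf μ ε₂ e₂' * pmfOf μ ε₃ e₃' *
              pmfOf μ (fun ω => (x ω, x' ω)) (b, b') else 0 :=
          hJoint (fun q => (q.2.2.1, q.2.2.2.1, q.2.2.2.2)) (e₃, a, a')
      _ = pmfOf μ ε₃ e₃ * pmfOf μ (fun ω => (x ω, x' ω)) (a, a') := by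
          simp [Prod.mk.injEq, ite_and, Finset.sum_ite_eq, Finset.sum_ite_eq',
            ← Finset.sum_mul, ← Finset.mul_sum, hp1, hp2, hp3]
  have hMxx : ∀ a a', pmfOf μ (fun ω => (x' ω, x ω)) (a', a)
      = pmfOf μ (fun ω => (x ω, x' ω)) (a, a') := by
    intro a a'
    exact pmf_eq_of_iff μ _ _ _ _ (by intro ω; simp [Prod.ext_iff]; tauto)
  have hB1 : ∀ (v : E × A × A) (e₂ : E),
      pmfOf μ (fun ω => ((ε₁ ω, x ω, x' ω), ε₂ ω)) (v, e₂)
      = pmfOf μ (fun ω => (ε₁ ω, x ω, x' ω)) v * pmfOf μ ε₂ e₂ := by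
    rintro ⟨e₁, a, a'⟩ e₂
    calc pmfOf μ (fun ω => ((ε₁ ω, x ω, x' ω), ε₂ ω)) ((e₁, a, a'), e₂)
        = ∑ e₁', ∑ e₂', ∑ e₃', ∑ b, ∑ b', if ((e₁', b, b'), e₂') = ((e₁, a, a'), e₂)
            then pmfOf μ ε₁ e₁' * pmfOf μ ε₂ e₂' * pmfOf μ ε₃ e₃' *
              pmfOf μ (fun ω => (x ω, x' ω)) (b, b') else 0 :=
          hJoint (fun q => ((q.1, q.2.2.2.1, q.2.2.2.2), q.2.1)) ((e₁, a, a'), e₂)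
      _ = pmfOf μ ε₁ e₁ * pmfOf μ ε₂ e₂ * pmfOf μ (fun ω => (x ω, x' ω)) (a, a') := by
          simp [Prod.mk.injEq, ite_and, Finset.sum_ite_eq, Finset.sum_ite_eq',
            ← Finset.sum_mul, ← Finset.mul_sum, hp1, hp2, hp3]
      _ = pmfOf μ (fun ω => (ε₁ ω, x ω, x' ω)) (e₁, a, a') * pmfOf μ ε₂ e₂ := by
          rw [hM1 e₁ a a']; ring
  have hB2 : ∀ (v : A × A) (e₁ : E),
      pmfOf μ (fun ω => ((x' ω, x ω), ε₁ ω)) (v, e₁)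
      = pmfOf μ (fun ω => (x' ω, x ω)) v * pmfOf μ ε₁ e₁ := by
    rintro ⟨a', a⟩ e₁
    calc pmfOf μ (fun ω => ((x' ω, x ω), ε₁ ω)) ((a', a), e₁)
        = ∑ e₁', ∑ e₂', ∑ e₃', ∑ b, ∑ b', if ((b', b), e₁') = ((a', a), e₁)
            then pmfOf μ ε₁ e₁' * pmfOf μ ε₂ e₂' * pmfOf μ ε₃ e₃' *
              pmfOf μ (fun ω => (x ω, x' ω)) (b, b') else 0 :=
          hJoint (fun q => ((q.2.2.2.2, q.2.2.2.1), q.1)) ((a', a), e₁)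
      _ = pmfOf μ ε₁ e₁ * pmfOf μ (fun ω => (x ω, x' ω)) (a, a') := by
          simp [Prod.mk.injEq, ite_and, Finset.sum_ite_eq, Finset.sum_ite_eq',
            ← Finset.sum_mul, ← Finset.mul_sum, hp1, hp2, hp3]
      _ = pmfOf μ (fun ω => (x' ω, x ω)) (a', a) * pmfOf μ ε₁ e₁ := by
          rw [hMxx a a']; ring
  have hB3 : ∀ (v : E' × A × A) (e₁ : E),
      pmfOf μ (fun ω => ((ε₃ ω, x ω, x' ω), ε₁ ω)) (v, e₁)
      = pmfOf μ (fun ω => (ε₃ ω, x ω, x' ω)) v * pmfOf μ ε₁ e₁ := by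
    rintro ⟨e₃, a, a'⟩ e₁
    calc pmfOf μ (fun ω => ((ε₃ ω, x ω, x' ω), ε₁ ω)) ((e₃, a, a'), e₁)
        = ∑ e₁', ∑ e₂', ∑ e₃', ∑ b, ∑ b', if ((e₃', b, b'), e₁') = ((e₃, a, a'), e₁)
            then pmfOf μ ε₁ e₁' * pmfOf μ ε₂ e₂' * pmfOf μ ε₃ e₃' *
              pmfOf μ (fun ω => (x ω, x' ω)) (b, b') else 0 :=
          hJoint (fun q => ((q.2.2.1, q.2.2.2.1, q.2.2.2.2), q.1)) ((e₃, a, a'), e₁)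
      _ = pmfOf μ ε₁ e₁ * pmfOf μ ε₃ e₃ * pmfOf μ (fun ω => (x ω, x' ω)) (a, a') := by
          simp [Prod.mk.injEq, ite_and, Finset.sum_ite_eq, Finset.sum_ite_eq',
            ← Finset.sum_mul, ← Finset.mul_sum, hp1, hp2, hp3]
      _ = pmfOf μ (fun ω => (ε₃ ω, x ω, x' ω)) (e₃, a, a') * pmfOf μ ε₁ e₁ := by
          rw [hM3 e₃ a a']; ring
  have hB4 : ∀ (v : E × A × A) (e₃ : E'),
      pmfOf μ (fun ω => ((ε₁ ω, x ω, x' ω), ε₃ ω)) (v, e₃)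
      = pmfOf μ (fun ω => (ε₁ ω, x ω, x' ω)) v * pmfOf μ ε₃ e₃ := by
    rintro ⟨e₁, a, a'⟩ e₃
    calc pmfOf μ (fun ω => ((ε₁ ω, x ω, x' ω), ε₃ ω)) ((e₁, a, a'), e₃)
        = ∑ e₁', ∑ e₂', ∑ e₃', ∑ b, ∑ b', if ((e₁', b, b'), e₃') = ((e₁, a, a'), e₃)
            then pmfOf μ ε₁ e₁' * pmfOf μ ε₂ e₂' * pmfOf μ ε₃ e₃' *
              pmfOf μ (fun ω => (x ω, x' ω)) (b, b') else 0 :=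
          hJoint (fun q => ((q.1, q.2.2.2.1, q.2.2.2.2), q.2.2.1)) ((e₁, a, a'), e₃)
      _ = pmfOf μ ε₁ e₁ * pmfOf μ ε₃ e₃ * pmfOf μ (fun ω => (x ω, x' ω)) (a, a') := by
          simp [Prod.mk.injEq, ite_and, Finset.sum_ite_eq, Finset.sum_ite_eq',
            ← Finset.sum_mul, ← Finset.mul_sum, hp1, hp2, hp3]
      _ = pmfOf μ (fun ω => (ε₁ ω, x ω, x' ω)) (e₁, a, a') * pmfOf μ ε₃ e₃ := by
          rw [hM1 e₁ a a']; ring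
  -- independence facts in the form needed by mi_drop_indep
  have factA : ∀ (ζ : Z) (a' : A) (e₂ : E),
      pmfOf μ (fun ω => (z ω, x' ω, ε₂ ω)) (ζ, a', e₂)
      = pmfOf μ (fun ω => (z ω, x' ω)) (ζ, a') * pmfOf μ ε₂ e₂ := by
    intro ζ a' e₂
    calc pmfOf μ (fun ω => (z ω, x' ω, ε₂ ω)) (ζ, a', e₂)
        = pmfOf μ (fun ω => ((z ω, x' ω), ε₂ ω)) ((ζ, a'), e₂) :=
          pmf_eq_of_iff μ _ _ _ _ (by intro ω; simp [Prod.ext_iff]; tauto)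
      _ = pmfOf μ (fun ω => (z ω, x' ω)) (ζ, a') * pmfOf μ ε₂ e₂ :=
          indep_push μ (fun ω => (ε₁ ω, x ω, x' ω)) ε₂ hB1
            (fun q => (g q.2.1 q.1, q.2.2)) (ζ, a') e₂
  have factB : ∀ (a' a : A) (e₁ : E),
      pmfOf μ (fun ω => (x' ω, x ω, ε₁ ω)) (a', a, e₁)
      = pmfOf μ (fun ω => (x' ω, x ω)) (a', a) * pmfOf μ ε₁ e₁ := by
    intro a' a e₁
    calc pmfOf μ (fun ω => (x' ω, x ω, ε₁ ω)) (a', a, e₁)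
        = pmfOf μ (fun ω => ((x' ω, x ω), ε₁ ω)) ((a', a), e₁) :=
          pmf_eq_of_iff μ _ _ _ _ (by intro ω; simp [Prod.ext_iff]; tauto)
      _ = pmfOf μ (fun ω => (x' ω, x ω)) (a', a) * pmfOf μ ε₁ e₁ := hB2 (a', a) e₁
  have factC : ∀ (b : B) (a : A) (e₁ : E),
      pmfOf μ (fun ω => (y ω, x ω, ε₁ ω)) (b, a, e₁)
      = pmfOf μ (fun ω => (y ω, x ω)) (b, a) * pmfOf μ ε₁ e₁ := by
    intro b a e₁
    calc pmfOf μ (fun ω => (y ω, x ω, ε₁ ω)) (b, a, e₁)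
        = pmfOf μ (fun ω => ((y ω, x ω), ε₁ ω)) ((b, a), e₁) :=
          pmf_eq_of_iff μ _ _ _ _ (by intro ω; simp [Prod.ext_iff]; tauto)
      _ = pmfOf μ (fun ω => (y ω, x ω)) (b, a) * pmfOf μ ε₁ e₁ :=
          indep_push μ (fun ω => (ε₃ ω, x ω, x' ω)) ε₁ hB3
            (fun q => (f q.2.2 q.1, q.2.1)) (b, a) e₁
  have factD : ∀ (a : A) (s : Z × A) (e₃ : E'),
      pmfOf μ (fun ω => (x ω, (z ω, x' ω), ε₃ ω)) (a, s, e₃)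
      = pmfOf μ (fun ω => (x ω, (z ω, x' ω))) (a, s) * pmfOf μ ε₃ e₃ := by
    intro a s e₃
    calc pmfOf μ (fun ω => (x ω, (z ω, x' ω), ε₃ ω)) (a, s, e₃)
        = pmfOf μ (fun ω => ((x ω, (z ω, x' ω)), ε₃ ω)) ((a, s), e₃) :=
          pmf_eq_of_iff μ _ _ _ _ (by intro ω; simp [Prod.ext_iff]; tauto)
      _ = pmfOf μ (fun ω => (x ω, (z ω, x' ω))) (a, s) * pmfOf μ ε₃ e₃ :=
          indep_push μ (fun ω => (ε₁ ω, x ω, x' ω)) ε₃ hB4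
            (fun q => (q.2.1, (g q.2.1 q.1, q.2.2))) (a, s) e₃
  -- Step 1 : I(z;z') ≤ I(z;x')
  have step1 : mi μ z z' ≤ mi μ z x' := by
    have d : mi μ z z' ≤ mi μ z (fun ω => (x' ω, ε₂ ω)) :=
      mi_dpi μ hμ0 hμ1 z (fun ω => (x' ω, ε₂ ω)) (fun p => g p.1 p.2)
    have e : mi μ z (fun ω => (x' ω, ε₂ ω)) = mi μ z x' :=
      mi_drop_indep μ hμ1 z x' ε₂ factA
    linarith
  -- Step 2 : I(x'; (z,x)) = I(x;x')  and similarly for y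
  have step2 : mi μ x' (fun ω => (z ω, x ω)) = mi μ x x' := by
    have d1 : mi μ x' (fun ω => (z ω, x ω)) ≤ mi μ x' (fun ω => (x ω, ε₁ ω)) :=
      mi_dpi μ hμ0 hμ1 x' (fun ω => (x ω, ε₁ ω)) (fun p => (g p.1 p.2, p.1))
    have e1 : mi μ x' (fun ω => (x ω, ε₁ ω)) = mi μ x' x :=
      mi_drop_indep μ hμ1 x' x ε₁ factB
    have d2 : mi μ x' x ≤ mi μ x' (fun ω => (z ω, x ω)) :=
      mi_dpi μ hμ0 hμ1 x' (fun ω => (z ω, x ω)) Prod.snd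
    have : mi μ x' (fun ω => (z ω, x ω)) = mi μ x' x := le_antisymm (by linarith) d2
    rw [this, mi_comm]
  have step2y : mi μ y (fun ω => (z ω, x ω)) = mi μ x y := by
    have d1 : mi μ y (fun ω => (z ω, x ω)) ≤ mi μ y (fun ω => (x ω, ε₁ ω)) :=
      mi_dpi μ hμ0 hμ1 y (fun ω => (x ω, ε₁ ω)) (fun p => (g p.1 p.2, p.1))
    have e1 : mi μ y (fun ω => (x ω, ε₁ ω)) = mi μ y x :=
      mi_drop_indep μ hμ1 y x ε₁ (fun b a e₁ => factC b a e₁)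
    have d2 : mi μ y x ≤ mi μ y (fun ω => (z ω, x ω)) :=
      mi_dpi μ hμ0 hμ1 y (fun ω => (z ω, x ω)) Prod.snd
    have : mi μ y (fun ω => (z ω, x ω)) = mi μ y x := le_antisymm (by linarith) d2
    rw [this, mi_comm]
  -- chain rules
  have chain1 : mi μ x' (fun ω => (z ω, x ω)) = mi μ x' z + cmi μ x' x z :=
    mi_chain μ hμ0 x' x z
  have chain2 : mi μ y (fun ω => (z ω, x ω)) = mi μ y z + cmi μ y x z :=
    mi_chain μ hμ0 y x z
  have chainA : mi μ x (fun ω => (z ω, x' ω)) = mi μ x z + cmi μ x x' z :=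
    mi_chain μ hμ0 x x' z
  have chainB : mi μ x (fun ω => (z ω, y ω)) = mi μ x z + cmi μ x y z :=
    mi_chain μ hμ0 x y z
  -- Step 5 : cmi x y z ≤ cmi x x' z
  have step5 : cmi μ x y z ≤ cmi μ x x' z := by
    have d : mi μ x (fun ω => (z ω, y ω)) ≤ mi μ x (fun ω => ((z ω, x' ω), ε₃ ω)) :=
      mi_dpi μ hμ0 hμ1 x (fun ω => ((z ω, x' ω), ε₃ ω)) (fun p => (p.1.1, f p.1.2 p.2))
    have e : mi μ x (fun ω => ((z ω, x' ω), ε₃ ω)) = mi μ x (fun ω => (z ω, x' ω)) :=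
      mi_drop_indep μ hμ1 x (fun ω => (z ω, x' ω)) ε₃ factD
    linarith
  -- cmi symmetries
  have sym1 : cmi μ x' x z = cmi μ x x' z := cmi_comm μ x' x z
  have sym2 : cmi μ y x z = cmi μ x y z := cmi_comm μ y x z
  -- positivity of the insufficiency gap
  have hyz : mi μ y z = mi μ z y := mi_comm μ y z
  have hx'z : mi μ x' z = mi μ z x' := mi_comm μ x' z
  -- conclude
  have gap : cmi μ x y z > 0 := by
    have := step2y
    rw [chain2] at this
    rw [hyz, sym2] at this
    linarith [hInsuff]
  have final : mi μ x x' = mi μ z x' + cmi μ x x' z := by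
    rw [← step2, chain1, hx'z, sym1]
  linarith [step1, step5, gap, final]
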